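/- For every integer m with 0 ≤ m ≤ 2N, the absolute difference |P(W = m) − Σ_{y=0}^{m} P(Y = y)·P(Z = m − y)| is at most (8/p²)(1 − p²)^(N/4). -/

import Mathlib

open MeasureTheory Filter

/-- The Bernoulli(p) measure on `Bool`: `true` has probability `p`. -/
noncomputable def bern (p : ℝ) : Measure Bool :=
  ENNReal.ofReal p • Measure.dirac true + ENNReal.ofReal (1 - p) • Measure.dirac false

/-- The law of a random subset of `{0, …, N}` where each element is included
independently with probability `p`, encoded by indicator functions. -/
noncomputable def prodBern (p : ℝ) (N : ℕ) : Measure (Fin (N + 1) → Bool) :=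
  Measure.pi fun _ => bern p

/-- `n` belongs to the sumset `A + A`, where `A ⊆ {0,…,N}` is encoded by `ω`. -/
def inSumset {N : ℕ} (ω : Fin (N + 1) → Bool) (n : ℕ) : Prop :=
  ∃ a b : Fin (N + 1), ω a = true ∧ ω b = true ∧ (a : ℕ) + (b : ℕ) = n

/-- `Y`: the number of integers in `{0,…,N}` missing from `A + A`. -/
noncomputable def Ycount (N : ℕ) (ω : Fin (N + 1) → Bool) : ℕ :=
  {n : ℕ | n ≤ N ∧ ¬ inSumset ω n}.ncard

/-- `Z`: the number of integers in `{N+1,…,2N}` missing from `A + A`. -/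
noncomputable def Zcount (N : ℕ) (ω : Fin (N + 1) → Bool) : ℕ :=
  {n : ℕ | N + 1 ≤ n ∧ n ≤ 2 * N ∧ ¬ inSumset ω n}.ncard

/-- `W`: the number of integers in `{0,…,2N}` missing from `A + A`. -/
noncomputable def Wcount (N : ℕ) (ω : Fin (N + 1) → Bool) : ℕ :=
  {n : ℕ | n ≤ 2 * N ∧ ¬ inSumset ω n}.ncard

/-- `Ỹ`: the number of integers in `{0,…,⌊N/2⌋}` missing from `A + A`. -/
noncomputable def Ytilde (N : ℕ) (ω : Fin (N + 1) → Bool) : ℕ :=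
  {n : ℕ | n ≤ N / 2 ∧ ¬ inSumset ω n}.ncard

/-- `Z̃`: the number of integers in `{⌊3N/2⌋+1,…,2N}` missing from `A + A`. -/
noncomputable def Ztilde (N : ℕ) (ω : Fin (N + 1) → Bool) : ℕ :=
  {n : ℕ | 3 * N / 2 + 1 ≤ n ∧ n ≤ 2 * N ∧ ¬ inSumset ω n}.ncard

/-- A string of `k` bits has no two consecutive ones. -/
def noTwoOnes {k : ℕ} (x : Fin k → Bool) : Prop :=
  ∀ i : ℕ, ∀ hi : i + 1 < k, ¬(x ⟨i, Nat.lt_of_succ_lt hi⟩ = true ∧ x ⟨i + 1, hi⟩ = true)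

/-- `a_k`: the probability that `k` i.i.d. Bernoulli(p) bits contain no two
consecutive 1's (with `a_0 = 1`). -/
noncomputable def aseq (p : ℝ) (k : ℕ) : ℝ :=
  ((Measure.pi fun _ : Fin k => bern p) {x | noTwoOnes x}).toReal

section Aux

open MeasureTheory

lemma measurableSet_all {k : ℕ} (s : Set (Fin k → Bool)) : MeasurableSet s :=
  (Set.toFinite s).measurableSet

lemma bern_true (p : ℝ) : bern p {x | x = true} = ENNReal.ofReal p := by
  simp [bern, Measure.dirac_apply]

lemma bern_isProb (p : ℝ) (hp0 : 0 ≤ p) (hp1 : p ≤ 1) : IsProbabilityMeasure (bern p) := by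
  constructor
  simp [bern]
  rw [← ENNReal.ofReal_add hp0 (by linarith), ← ENNReal.ofReal_one]
  norm_num

lemma prodBern_isProb (p : ℝ) (hp0 : 0 ≤ p) (hp1 : p ≤ 1) (N : ℕ) :
    IsProbabilityMeasure (prodBern p N) := by
  haveI := bern_isProb p hp0 hp1
  unfold prodBern; infer_instance

lemma prodBern_box (p : ℝ) (hp0 : 0 ≤ p) (hp1 : p ≤ 1) (N : ℕ) (F : Finset (Fin (N+1))) :
    prodBern p N {ω | ∀ i ∈ F, ω i = true} = ENNReal.ofReal p ^ F.card := by
  haveI := bern_isProb p hp0 hp1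
  have h : {ω : Fin (N+1) → Bool | ∀ i ∈ F, ω i = true}
      = Set.univ.pi (fun i => if i ∈ F then {x | x = true} else Set.univ) := by
    ext ω
    simp only [Set.mem_setOf_eq, Set.mem_pi, Set.mem_univ, forall_true_left]
    constructor
    · intro h i; split <;> simp_all
    · intro h i hi; have := h i; simp_all
  rw [h, prodBern, Measure.pi_pi]
  rw [Finset.prod_congr rfl (g := fun i => if i ∈ F then bern p {x | x = true} else 1)
    (fun i _ => by by_cases h : i ∈ F <;>
      simp only [h, if_true, if_false, measure_univ])]
  rw [Finset.prod_ite_mem Finset.univ F]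
  simp only [Finset.univ_inter, Finset.prod_const]
  exact congrArg (· ^ F.card) (bern_true p)

lemma pi_split (p : ℝ) (hp0 : 0 ≤ p) (hp1 : p ≤ 1) (N : ℕ)
    (pred : Fin (N + 1) → Prop) [DecidablePred pred]
    (A B : Set (Fin (N + 1) → Bool))
    (hA : ∀ ω ω' : Fin (N + 1) → Bool, (∀ i, pred i → ω i = ω' i) → ω ∈ A → ω' ∈ A)
    (hB : ∀ ω ω' : Fin (N + 1) → Bool, (∀ i, ¬ pred i → ω i = ω' i) → ω ∈ B → ω' ∈ B) :
    prodBern p N (A ∩ B) = prodBern p N A * prodBern p N B := by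
  haveI := bern_isProb p hp0 hp1
  set e := MeasurableEquiv.piEquivPiSubtypeProd (fun _ : Fin (N + 1) => Bool) pred with he
  set SA : Set ({i : Fin (N+1) // pred i} → Bool) :=
    {x | (fun i => if h : pred i then x ⟨i, h⟩ else false) ∈ A} with hSA
  set SB : Set ({i : Fin (N+1) // ¬ pred i} → Bool) :=
    {x | (fun i => if h : ¬ pred i then x ⟨i, h⟩ else false) ∈ B} with hSB
  have hmemA : ∀ ω : Fin (N+1) → Bool, ω ∈ A ↔ (fun i : {i // pred i} => ω i) ∈ SA := by
    intro ω
    constructor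
    · intro h
      refine hA ω _ (fun i hi => ?_) h
      simp [hi]
    · intro h
      refine hA _ ω (fun i hi => ?_) h
      simp [hi]
  have hmemB : ∀ ω : Fin (N+1) → Bool, ω ∈ B ↔ (fun i : {i // ¬ pred i} => ω i) ∈ SB := by
    intro ω
    constructor
    · intro h
      refine hB ω _ (fun i hi => ?_) h
      simp [hi]
    · intro h
      refine hB _ ω (fun i hi => ?_) h
      simp [hi]
  have hAeq : A = ⇑e ⁻¹' (SA ×ˢ Set.univ) := by
    ext ω
    simp only [Set.mem_preimage, Set.mem_prod, Set.mem_univ, and_true, he,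
      MeasurableEquiv.piEquivPiSubtypeProd, Equiv.piEquivPiSubtypeProd,
      MeasurableEquiv.coe_mk, Equiv.coe_fn_mk]
    exact hmemA ω
  have hBeq : B = ⇑e ⁻¹' (Set.univ ×ˢ SB) := by
    ext ω
    simp only [Set.mem_preimage, Set.mem_prod, Set.mem_univ, true_and, he,
      MeasurableEquiv.piEquivPiSubtypeProd, Equiv.piEquivPiSubtypeProd,
      MeasurableEquiv.coe_mk, Equiv.coe_fn_mk]
    exact hmemB ω
  have hABeq : A ∩ B = ⇑e ⁻¹' (SA ×ˢ SB) := by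
    rw [hAeq, hBeq, ← Set.preimage_inter, Set.prod_inter_prod, Set.univ_inter, Set.inter_univ]
  have hmp := measurePreserving_piEquivPiSubtypeProd (fun _ : Fin (N + 1) => bern p) pred
  have hprod : ∀ (S : Set ({i : Fin (N+1) // pred i} → Bool))
      (T : Set ({i : Fin (N+1) // ¬ pred i} → Bool)),
      prodBern p N (⇑e ⁻¹' (S ×ˢ T)) =
        (Measure.pi fun _ : {i : Fin (N+1) // pred i} => bern p) S *
        (Measure.pi fun _ : {i : Fin (N+1) // ¬ pred i} => bern p) T := by
    intro S T
    rw [show prodBern p N = Measure.pi fun _ => bern p from rfl]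
    rw [hmp.measure_preimage ((Set.toFinite _).measurableSet.nullMeasurableSet)]
    exact Measure.prod_prod S T
  rw [hABeq, hprod, hAeq, hprod, hBeq, hprod]
  simp [measure_univ]

/-- The event that the pair of coordinates `a`, `n - a` is not simultaneously `true`. -/
def pairFail (N n a : ℕ) : Set (Fin (N + 1) → Bool) :=
  {ω | ∀ (h1 : a < N + 1) (h2 : n - a < N + 1), ¬(ω ⟨a, h1⟩ = true ∧ ω ⟨n - a, h2⟩ = true)}

def pairsFail (N n : ℕ) (I : Finset ℕ) : Set (Fin (N + 1) → Bool) :=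
  {ω | ∀ a ∈ I, ω ∈ pairFail N n a}

lemma pairFail_meas (p : ℝ) (hp0 : 0 ≤ p) (hp1 : p ≤ 1) (N n a : ℕ)
    (h1 : a < N + 1) (h2 : n - a < N + 1) (hne : a ≠ n - a) :
    prodBern p N (pairFail N n a) = ENNReal.ofReal (1 - p ^ 2) := by
  haveI := bern_isProb p hp0 hp1
  haveI := prodBern_isProb p hp0 hp1 N
  have hc : (pairFail N n a)ᶜ =
      {ω : Fin (N+1) → Bool | ∀ i ∈ ({⟨a, h1⟩, ⟨n - a, h2⟩} : Finset (Fin (N+1))), ω i = true} := by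
    ext ω
    simp only [pairFail, Set.mem_compl_iff, Set.mem_setOf_eq, not_forall, Finset.mem_insert,
      Finset.mem_singleton]
    constructor
    · rintro ⟨_, _, h⟩ i hi
      rw [not_not] at h
      rcases hi with rfl | rfl
      · exact h.1
      · exact h.2
    · intro h
      exact ⟨h1, h2, not_not_intro ⟨h _ (Or.inl rfl), h _ (Or.inr rfl)⟩⟩
  have hcard : ({⟨a, h1⟩, ⟨n - a, h2⟩} : Finset (Fin (N+1))).card = 2 := by
    rw [Finset.card_insert_of_notMem (by simp [Fin.ext_iff, hne]), Finset.card_singleton]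
  have := measure_compl (μ := prodBern p N) (s := pairFail N n a)
    (measurableSet_all _) (measure_ne_top _ _)
  rw [hc, prodBern_box p hp0 hp1, hcard, measure_univ] at this
  have h3 : prodBern p N (pairFail N n a) = 1 - ENNReal.ofReal p ^ 2 := by
    rw [this, ENNReal.sub_sub_cancel ENNReal.one_ne_top prob_le_one]
  rw [h3, ← ENNReal.ofReal_pow hp0, ← ENNReal.ofReal_one,
    ← ENNReal.ofReal_sub _ (by positivity)]

lemma pairsFail_meas (p : ℝ) (hp0 : 0 ≤ p) (hp1 : p ≤ 1) (N n : ℕ) (I : Finset ℕ)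
    (hI : ∀ a ∈ I, 2 * a < n ∧ n ≤ a + N) :
    prodBern p N (pairsFail N n I) = ENNReal.ofReal (1 - p ^ 2) ^ I.card := by
  haveI := prodBern_isProb p hp0 hp1 N
  induction I using Finset.induction_on with
  | empty => simp [pairsFail]
  | @insert a I ha ih =>
    have hIa := hI a (Finset.mem_insert_self a I)
    have hsplit : pairsFail N n (insert a I) = pairFail N n a ∩ pairsFail N n I := by
      ext ω; simp [pairsFail, Finset.mem_insert, or_imp, forall_and]
    classical
    rw [hsplit, pi_split p hp0 hp1 N (fun i => (i : ℕ) = a ∨ (i : ℕ) = n - a) _ _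
      (fun ω ω' hag hω => by
        intro h1 h2
        have e1 : ω' ⟨a, h1⟩ = ω ⟨a, h1⟩ := (hag _ (Or.inl rfl)).symm
        have e2 : ω' ⟨n - a, h2⟩ = ω ⟨n - a, h2⟩ := (hag _ (Or.inr rfl)).symm
        rw [e1, e2]; exact hω h1 h2)
      (fun ω ω' hag hω => by
        intro b hb h1 h2
        have hIb := hI b (Finset.mem_insert_of_mem hb)
        have hba : b ≠ a := fun h => ha (h ▸ hb)
        have e1 : ω' ⟨b, h1⟩ = ω ⟨b, h1⟩ := by
          refine (hag _ ?_).symm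
          simp only [not_or]
          exact ⟨hba, by omega⟩
        have e2 : ω' ⟨n - b, h2⟩ = ω ⟨n - b, h2⟩ := by
          refine (hag _ ?_).symm
          simp only [not_or]
          constructor <;> omega
        rw [e1, e2]; exact hω b hb h1 h2)]
    rw [pairFail_meas p hp0 hp1 N n a (by omega) (by omega) (by omega),
      ih (fun b hb => hI b (Finset.mem_insert_of_mem hb)),
      Finset.card_insert_of_notMem ha, pow_succ]
    ring

lemma miss_bound (p : ℝ) (hp0 : 0 ≤ p) (hp1 : p ≤ 1) (N n : ℕ) :
    prodBern p N {ω : Fin (N+1) → Bool | ¬ inSumset ω n} ≤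
      ENNReal.ofReal (1 - p ^ 2) ^ (Finset.Ico (n - N) ((n + 1) / 2)).card := by
  rw [← pairsFail_meas p hp0 hp1 N n _ (fun a ha => by
    simp only [Finset.mem_Ico] at ha; omega)]
  refine measure_mono (fun ω hω => ?_)
  intro a ha h1 h2
  rintro ⟨e1, e2⟩
  simp only [Finset.mem_Ico] at ha
  exact hω ⟨⟨a, h1⟩, ⟨n - a, h2⟩, e1, e2, by simp only [Fin.val_mk]; omega⟩

lemma finite_aux (M : ℕ) (P : ℕ → Prop) : {n : ℕ | n ≤ M ∧ P n}.Finite :=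
  (Set.finite_Iic M).subset (fun n hn => hn.1)

lemma Wcount_eq (N : ℕ) (ω : Fin (N + 1) → Bool) :
    Wcount N ω = Ycount N ω + Zcount N ω := by
  have hs : {n : ℕ | n ≤ 2 * N ∧ ¬ inSumset ω n}
      = {n : ℕ | n ≤ N ∧ ¬ inSumset ω n} ∪
        {n : ℕ | N + 1 ≤ n ∧ n ≤ 2 * N ∧ ¬ inSumset ω n} := by
    ext n
    simp only [Set.mem_setOf_eq, Set.mem_union]
    constructor
    · rintro ⟨h1, h2⟩
      by_cases h : n ≤ N
      · exact Or.inl ⟨h, h2⟩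
      · exact Or.inr ⟨by omega, h1, h2⟩
    · rintro (⟨h1, h2⟩ | ⟨h1, h2, h3⟩)
      · exact ⟨by omega, h2⟩
      · exact ⟨h2, h3⟩
  rw [Wcount, hs, Set.ncard_union_eq
    (Set.disjoint_left.2 (fun n h1 h2 => by simp only [Set.mem_setOf_eq] at h1 h2; omega))
    (finite_aux N _) (((Set.finite_Iic (2 * N)).subset (fun n hn => hn.2.1)))]
  rfl

lemma Y_ne_tilde (N : ℕ) (ω : Fin (N + 1) → Bool) (h : Ycount N ω ≠ Ytilde N ω) :
    ∃ n : ℕ, N / 2 < n ∧ n ≤ N ∧ ¬ inSumset ω n := by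
  by_contra hno
  push_neg at hno
  refine h ?_
  rw [Ycount, Ytilde]
  congr 1
  ext n
  simp only [Set.mem_setOf_eq]
  constructor
  · rintro ⟨h1, h2⟩
    refine ⟨?_, h2⟩
    by_contra hgt
    exact h2 (hno n (by omega) h1)
  · rintro ⟨h1, h2⟩
    exact ⟨by omega, h2⟩

lemma Z_ne_tilde (N : ℕ) (ω : Fin (N + 1) → Bool) (h : Zcount N ω ≠ Ztilde N ω) :
    ∃ n : ℕ, N < n ∧ n ≤ N + N / 2 ∧ ¬ inSumset ω n := by
  by_contra hno
  push_neg at hno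
  refine h ?_
  rw [Zcount, Ztilde]
  congr 1
  ext n
  simp only [Set.mem_setOf_eq]
  constructor
  · rintro ⟨h1, h2, h3⟩
    refine ⟨?_, h2, h3⟩
    by_contra hgt
    exact h3 (hno n (by omega) (by omega))
  · rintro ⟨h1, h2, h3⟩
    exact ⟨by omega, h2, h3⟩

lemma Ytilde_local (N : ℕ) (ω ω' : Fin (N + 1) → Bool)
    (hag : ∀ i : Fin (N + 1), (i : ℕ) ≤ N / 2 → ω i = ω' i) :
    Ytilde N ω = Ytilde N ω' := by
  rw [Ytilde, Ytilde]
  congr 1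
  ext n
  simp only [Set.mem_setOf_eq, and_congr_right_iff]
  intro hn
  have : inSumset ω n ↔ inSumset ω' n := by
    constructor
    · rintro ⟨a, b, ha, hb, hab⟩
      exact ⟨a, b, (hag a (by omega)).symm ▸ ha, (hag b (by omega)).symm ▸ hb, hab⟩
    · rintro ⟨a, b, ha, hb, hab⟩
      exact ⟨a, b, (hag a (by omega)) ▸ ha, (hag b (by omega)) ▸ hb, hab⟩
  tauto

lemma Ztilde_local (N : ℕ) (ω ω' : Fin (N + 1) → Bool)
    (hag : ∀ i : Fin (N + 1), N / 2 < (i : ℕ) → ω i = ω' i) :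
    Ztilde N ω = Ztilde N ω' := by
  rw [Ztilde, Ztilde]
  congr 1
  ext n
  simp only [Set.mem_setOf_eq]
  constructor
  · rintro ⟨h1, h2, h3⟩
    refine ⟨h1, h2, fun hin => h3 ?_⟩
    obtain ⟨a, b, ha, hb, hab⟩ := hin
    have hA : N / 2 < (a : ℕ) := by have := a.isLt; have := b.isLt; omega
    have hB : N / 2 < (b : ℕ) := by have := a.isLt; have := b.isLt; omega
    exact ⟨a, b, (hag a hA) ▸ ha, (hag b hB) ▸ hb, hab⟩
  · rintro ⟨h1, h2, h3⟩
    refine ⟨h1, h2, fun hin => h3 ?_⟩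
    obtain ⟨a, b, ha, hb, hab⟩ := hin
    have hA : N / 2 < (a : ℕ) := by have := a.isLt; have := b.isLt; omega
    have hB : N / 2 < (b : ℕ) := by have := a.isLt; have := b.isLt; omega
    exact ⟨a, b, (hag a hA).symm ▸ ha, (hag b hB).symm ▸ hb, hab⟩

lemma tilde_indep (p : ℝ) (hp0 : 0 ≤ p) (hp1 : p ≤ 1) (N : ℕ) (y z : ℕ) :
    prodBern p N ({ω | Ytilde N ω = y} ∩ {ω | Ztilde N ω = z}) =
      prodBern p N {ω | Ytilde N ω = y} * prodBern p N {ω | Ztilde N ω = z} := by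
  classical
  exact pi_split p hp0 hp1 N (fun i => (i : ℕ) ≤ N / 2) _ _
    (fun ω ω' hag hω => by
      simp only [Set.mem_setOf_eq] at *
      rw [← Ytilde_local N ω ω' hag]; exact hω)
    (fun ω ω' hag hω => by
      simp only [Set.mem_setOf_eq] at *
      rw [← Ztilde_local N ω ω' (fun i hi => hag i (by omega))]; exact hω)

lemma geom_half (q : ℝ) (h0 : 0 ≤ q) (h1 : q < 1) (J : ℕ) :
    ∑ j ∈ Finset.range J, q ^ (j / 2) ≤ 2 / (1 - q) := by
  have key : ∀ K, ∑ j ∈ Finset.range (2 * K), q ^ (j / 2)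
      = 2 * ∑ k ∈ Finset.range K, q ^ k := by
    intro K
    induction K with
    | zero => simp
    | succ K ih =>
      rw [show 2 * (K + 1) = 2 * K + 1 + 1 by ring, Finset.sum_range_succ,
        Finset.sum_range_succ, ih, Finset.sum_range_succ,
        show (2 * K + 1) / 2 = K by omega, show (2 * K) / 2 = K by omega]
      ring
  have h2 : ∑ j ∈ Finset.range J, q ^ (j / 2) ≤ ∑ j ∈ Finset.range (2 * J), q ^ (j / 2) :=
    Finset.sum_le_sum_of_subset_of_nonneg
      (Finset.range_subset_range.2 (by omega)) (fun i _ _ => pow_nonneg h0 _)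
  have h3 : ∑ k ∈ Finset.range J, q ^ k ≤ 1 / (1 - q) := by
    rw [geom_sum_eq (by linarith : q ≠ 1),
      show q ^ J - 1 = -(1 - q ^ J) by ring, show q - 1 = -(1 - q) by ring, neg_div_neg_eq]
    have hq : (0:ℝ) < 1 - q := by linarith
    have : 0 ≤ q ^ J := pow_nonneg h0 _
    gcongr <;> nlinarith
  calc ∑ j ∈ Finset.range J, q ^ (j / 2) ≤ 2 * ∑ k ∈ Finset.range J, q ^ k := by
        rw [← key]; exact h2
    _ ≤ 2 * (1 / (1 - q)) := by linarith
    _ = 2 / (1 - q) := by ring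

lemma alpha_sum (q : ℝ) (h0 : 0 ≤ q) (h1 : q < 1) (N : ℕ) :
    ∑ n ∈ Finset.Ioc (N / 2) N, q ^ ((n + 1) / 2)
      ≤ q ^ ((N / 2 + 2) / 2) * (2 / (1 - q)) := by
  have : Finset.Ioc (N / 2) N = Finset.Ico (N / 2 + 1) (N + 1) := by
    ext x; simp only [Finset.mem_Ioc, Finset.mem_Ico]; omega
  rw [this, Finset.sum_Ico_eq_sum_range]
  have hterm : ∀ k, q ^ ((N / 2 + 1 + k + 1) / 2) ≤ q ^ ((N / 2 + 2) / 2) * q ^ (k / 2) := by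
    intro k
    rw [← pow_add]
    exact pow_le_pow_of_le_one h0 h1.le (by omega)
  calc ∑ k ∈ Finset.range (N + 1 - (N / 2 + 1)), q ^ ((N / 2 + 1 + k + 1) / 2)
      ≤ ∑ k ∈ Finset.range (N + 1 - (N / 2 + 1)), q ^ ((N / 2 + 2) / 2) * q ^ (k / 2) :=
        Finset.sum_le_sum (fun k _ => hterm k)
    _ = q ^ ((N / 2 + 2) / 2) * ∑ k ∈ Finset.range (N + 1 - (N / 2 + 1)), q ^ (k / 2) := by
        rw [Finset.mul_sum]
    _ ≤ q ^ ((N / 2 + 2) / 2) * (2 / (1 - q)) := by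
        exact mul_le_mul_of_nonneg_left (geom_half q h0 h1 _) (pow_nonneg h0 _)

lemma beta_sum (q : ℝ) (h0 : 0 ≤ q) (h1 : q < 1) (N : ℕ) :
    ∑ n ∈ Finset.Ioc N (N + N / 2), q ^ (N - n / 2)
      ≤ q ^ (N - (N + N / 2) / 2) * (2 / (1 - q)) := by
  have : Finset.Ioc N (N + N / 2) = Finset.Ico (N + 1) (N + N / 2 + 1) := by
    ext x; simp only [Finset.mem_Ioc, Finset.mem_Ico]; omega
  rw [this, Finset.sum_Ico_eq_sum_range, show N + N / 2 + 1 - (N + 1) = N / 2 by omega]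
  have hterm : ∀ k, k < N / 2 → q ^ (N - (N + 1 + k) / 2)
      ≤ q ^ (N - (N + N / 2) / 2) * q ^ ((N / 2 - 1 - k) / 2) := by
    intro k hk
    rw [← pow_add]
    refine pow_le_pow_of_le_one h0 h1.le ?_
    omega
  calc ∑ k ∈ Finset.range (N / 2), q ^ (N - (N + 1 + k) / 2)
      ≤ ∑ k ∈ Finset.range (N / 2), q ^ (N - (N + N / 2) / 2) * q ^ ((N / 2 - 1 - k) / 2) :=
        Finset.sum_le_sum (fun k hk => hterm k (Finset.mem_range.1 hk))
    _ = q ^ (N - (N + N / 2) / 2) * ∑ k ∈ Finset.range (N / 2), q ^ ((N / 2 - 1 - k) / 2) := by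
        rw [Finset.mul_sum]
    _ = q ^ (N - (N + N / 2) / 2) * ∑ k ∈ Finset.range (N / 2), q ^ (k / 2) := by
        rw [Finset.sum_range_reflect (fun j => q ^ (j / 2)) (N / 2)]
    _ ≤ q ^ (N - (N + N / 2) / 2) * (2 / (1 - q)) :=
        mul_le_mul_of_nonneg_left (geom_half q h0 h1 _) (pow_nonneg h0 _)

end Aux
section Main

open MeasureTheory

lemma pr_nonneg (p : ℝ) (N : ℕ) (s : Set (Fin (N+1) → Bool)) :
    0 ≤ (prodBern p N s).toReal := ENNReal.toReal_nonneg

lemma pr_le_one (p : ℝ) (hp0 : 0 ≤ p) (hp1 : p ≤ 1) (N : ℕ) (s : Set (Fin (N+1) → Bool)) :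
    (prodBern p N s).toReal ≤ 1 := by
  haveI := prodBern_isProb p hp0 hp1 N
  exact ENNReal.toReal_mono ENNReal.one_ne_top prob_le_one |>.trans_eq ENNReal.toReal_one

lemma pr_mono (p : ℝ) (hp0 : 0 ≤ p) (hp1 : p ≤ 1) (N : ℕ) {s t : Set (Fin (N+1) → Bool)}
    (h : s ⊆ t) : (prodBern p N s).toReal ≤ (prodBern p N t).toReal := by
  haveI := prodBern_isProb p hp0 hp1 N
  exact ENNReal.toReal_mono (measure_ne_top _ _) (measure_mono h)

lemma pr_union_le (p : ℝ) (hp0 : 0 ≤ p) (hp1 : p ≤ 1) (N : ℕ)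
    (s t : Set (Fin (N+1) → Bool)) :
    (prodBern p N (s ∪ t)).toReal ≤ (prodBern p N s).toReal + (prodBern p N t).toReal := by
  haveI := prodBern_isProb p hp0 hp1 N
  refine (ENNReal.toReal_mono ?_ (measure_union_le s t)).trans_eq
    (ENNReal.toReal_add (measure_ne_top _ _) (measure_ne_top _ _))
  exact ENNReal.add_ne_top.2 ⟨measure_ne_top _ _, measure_ne_top _ _⟩

lemma pr_abs_sub_le (p : ℝ) (hp0 : 0 ≤ p) (hp1 : p ≤ 1) (N : ℕ)
    (A B E : Set (Fin (N+1) → Bool)) (hAB : A ⊆ B ∪ E) (hBA : B ⊆ A ∪ E) :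
    |(prodBern p N A).toReal - (prodBern p N B).toReal| ≤ (prodBern p N E).toReal := by
  haveI := prodBern_isProb p hp0 hp1 N
  have h1 : (prodBern p N A).toReal ≤ (prodBern p N B).toReal + (prodBern p N E).toReal :=
    (pr_mono p hp0 hp1 N hAB).trans (pr_union_le p hp0 hp1 N B E)
  have h2 : (prodBern p N B).toReal ≤ (prodBern p N A).toReal + (prodBern p N E).toReal :=
    (pr_mono p hp0 hp1 N hBA).trans (pr_union_le p hp0 hp1 N A E)
  rw [abs_le]
  constructor <;> linarith

lemma pr_sum_disjoint_le (p : ℝ) (hp0 : 0 ≤ p) (hp1 : p ≤ 1) (N : ℕ)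
    (s : Finset ℕ) (f : ℕ → Set (Fin (N+1) → Bool)) (E : Set (Fin (N+1) → Bool))
    (hd : ∀ y ∈ s, ∀ z ∈ s, y ≠ z → Disjoint (f y) (f z))
    (hsub : ∀ y ∈ s, f y ⊆ E) :
    ∑ y ∈ s, (prodBern p N (f y)).toReal ≤ (prodBern p N E).toReal := by
  haveI := prodBern_isProb p hp0 hp1 N
  rw [← ENNReal.toReal_sum (fun y _ => measure_ne_top _ _),
    ← measure_biUnion_finset (fun y hy z hz hne => hd y hy z hz hne)
      (fun b _ => measurableSet_all _)]
  exact ENNReal.toReal_mono (measure_ne_top _ _) (measure_mono (Set.iUnion₂_subset hsub))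

lemma pr_union_bound (p : ℝ) (hp0 : 0 ≤ p) (hp1 : p ≤ 1) (N : ℕ)
    (s : Finset ℕ) (f : ℕ → Set (Fin (N+1) → Bool)) (E : Set (Fin (N+1) → Bool))
    (hsub : E ⊆ ⋃ y ∈ s, f y) :
    (prodBern p N E).toReal ≤ ∑ y ∈ s, (prodBern p N (f y)).toReal := by
  haveI := prodBern_isProb p hp0 hp1 N
  rw [← ENNReal.toReal_sum (fun y _ => measure_ne_top _ _)]
  refine ENNReal.toReal_mono ?_ ((measure_mono hsub).trans (measure_biUnion_finset_le s f))
  exact (ENNReal.sum_lt_top.mpr (fun y _ => measure_lt_top _ _)).ne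

lemma pr_diff_eq (p : ℝ) (hp0 : 0 ≤ p) (hp1 : p ≤ 1) (N : ℕ)
    (f g : (Fin (N+1) → Bool) → ℕ) (y : ℕ) :
    (prodBern p N {ω | f ω = y}).toReal - (prodBern p N {ω | g ω = y}).toReal
      = (prodBern p N {ω | f ω = y ∧ f ω ≠ g ω}).toReal
        - (prodBern p N {ω | g ω = y ∧ f ω ≠ g ω}).toReal := by
  haveI := prodBern_isProb p hp0 hp1 N
  have key : ∀ h : (Fin (N+1) → Bool) → ℕ,
      ({ω | h ω = y} : Set _) = {ω | h ω = y ∧ f ω = g ω} ∪ {ω | h ω = y ∧ f ω ≠ g ω} := by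
    intro h; ext ω; simp only [Set.mem_setOf_eq, Set.mem_union]; tauto
  have hadd : ∀ h : (Fin (N+1) → Bool) → ℕ,
      (prodBern p N {ω | h ω = y}).toReal
        = (prodBern p N {ω | h ω = y ∧ f ω = g ω}).toReal
          + (prodBern p N {ω | h ω = y ∧ f ω ≠ g ω}).toReal := by
    intro h
    rw [key h, measure_union ?_ (measurableSet_all _),
      ENNReal.toReal_add (measure_ne_top _ _) (measure_ne_top _ _)]
    exact Set.disjoint_left.2 (fun ω h1 h2 => by
      simp only [Set.mem_setOf_eq] at h1 h2; tauto)
  have heq : ({ω | f ω = y ∧ f ω = g ω} : Set (Fin (N+1) → Bool))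
      = {ω | g ω = y ∧ f ω = g ω} := by
    ext ω; simp only [Set.mem_setOf_eq]
    constructor
    · rintro ⟨h1, h2⟩; exact ⟨h2 ▸ h1, h2⟩
    · rintro ⟨h1, h2⟩; exact ⟨h2.symm ▸ h1, h2⟩
  rw [hadd f, hadd g, heq]
  ring

lemma sum_signed_bound (s : Finset ℕ) (A B c : ℕ → ℝ) (α : ℝ)
    (hA : ∀ y ∈ s, 0 ≤ A y) (hB : ∀ y ∈ s, 0 ≤ B y)
    (hc0 : ∀ y ∈ s, 0 ≤ c y) (hc1 : ∀ y ∈ s, c y ≤ 1)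
    (hSA : ∑ y ∈ s, A y ≤ α) (hSB : ∑ y ∈ s, B y ≤ α) :
    |∑ y ∈ s, (A y - B y) * c y| ≤ α := by
  rw [abs_le]
  constructor
  · have h1 : ∀ y ∈ s, -(B y) ≤ (A y - B y) * c y := by
      intro y hy
      have := hA y hy; have := hB y hy; have := hc0 y hy; have := hc1 y hy
      nlinarith
    have := Finset.sum_le_sum h1
    rw [Finset.sum_neg_distrib] at this
    linarith
  · have h1 : ∀ y ∈ s, (A y - B y) * c y ≤ A y := by
      intro y hy
      have := hA y hy; have := hB y hy; have := hc0 y hy; have := hc1 y hy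
      nlinarith
    have := Finset.sum_le_sum h1
    linarith

lemma tilde_conv (p : ℝ) (hp0 : 0 ≤ p) (hp1 : p ≤ 1) (N m : ℕ) :
    (prodBern p N {ω | Ytilde N ω + Ztilde N ω = m}).toReal
      = ∑ y ∈ Finset.range (m + 1),
          (prodBern p N {ω | Ytilde N ω = y}).toReal *
            (prodBern p N {ω | Ztilde N ω = m - y}).toReal := by
  haveI := prodBern_isProb p hp0 hp1 N
  have hs : {ω : Fin (N+1) → Bool | Ytilde N ω + Ztilde N ω = m}
      = ⋃ y ∈ Finset.range (m + 1),
          ({ω | Ytilde N ω = y} ∩ {ω | Ztilde N ω = m - y}) := by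
    ext ω
    simp only [Set.mem_setOf_eq, Set.mem_iUnion, Set.mem_inter_iff, Finset.mem_range]
    constructor
    · intro h
      exact ⟨Ytilde N ω, by omega, rfl, by omega⟩
    · rintro ⟨y, hy, h1, h2⟩
      omega
  rw [hs, measure_biUnion_finset ?_ (fun b _ => measurableSet_all _)]
  · rw [ENNReal.toReal_sum (fun y _ => measure_ne_top _ _)]
    refine Finset.sum_congr rfl (fun y _ => ?_)
    rw [tilde_indep p hp0 hp1 N y (m - y), ENNReal.toReal_mul]
  · intro y hy z hz hne
    refine Set.disjoint_left.2 (fun ω h1 h2 => ?_)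
    simp only [Set.mem_inter_iff, Set.mem_setOf_eq] at h1 h2
    exact hne (h1.1.symm.trans h2.1)

lemma alpha_bound (p : ℝ) (hp0 : 0 < p) (hp1 : p < 1) (N : ℕ) :
    (prodBern p N {ω | Ycount N ω ≠ Ytilde N ω}).toReal
      ≤ 2 / p ^ 2 * (1 - p ^ 2) ^ ((N : ℝ) / 4) := by
  set q : ℝ := 1 - p ^ 2 with hq
  have hq0 : 0 < q := by nlinarith
  have hq1 : q < 1 := by nlinarith
  have step1 : (prodBern p N {ω | Ycount N ω ≠ Ytilde N ω}).toReal
      ≤ ∑ n ∈ Finset.Ioc (N / 2) N,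
          (prodBern p N {ω : Fin (N+1) → Bool | ¬ inSumset ω n}).toReal := by
    refine pr_union_bound p hp0.le hp1.le N _ _ _ (fun ω hω => ?_)
    simp only [Set.mem_setOf_eq] at hω
    obtain ⟨n, h1, h2, h3⟩ := Y_ne_tilde N ω hω
    simp only [Set.mem_iUnion, Finset.mem_Ioc]
    exact ⟨n, ⟨h1, h2⟩, h3⟩
  have step2 : ∀ n ∈ Finset.Ioc (N / 2) N,
      (prodBern p N {ω : Fin (N+1) → Bool | ¬ inSumset ω n}).toReal ≤ q ^ ((n + 1) / 2) := by
    intro n hn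
    simp only [Finset.mem_Ioc] at hn
    have hb := miss_bound p hp0.le hp1.le N n
    rw [Nat.card_Ico, show (n + 1) / 2 - (n - N) = (n + 1) / 2 by omega] at hb
    calc (prodBern p N {ω : Fin (N+1) → Bool | ¬ inSumset ω n}).toReal
        ≤ (ENNReal.ofReal q ^ ((n + 1) / 2)).toReal :=
          ENNReal.toReal_mono (ENNReal.pow_ne_top ENNReal.ofReal_ne_top) hb
      _ = q ^ ((n + 1) / 2) := by
          rw [ENNReal.toReal_pow, ENNReal.toReal_ofReal hq0.le]
  have step3 : ∑ n ∈ Finset.Ioc (N / 2) N, q ^ ((n + 1) / 2)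
      ≤ q ^ ((N / 2 + 2) / 2) * (2 / p ^ 2) := by
    have := alpha_sum q hq0.le hq1 N
    rw [show (1 : ℝ) - q = p ^ 2 by rw [hq]; ring] at this
    exact this
  have step4 : q ^ ((N / 2 + 2) / 2) ≤ q ^ ((N : ℝ) / 4) := by
    rw [← Real.rpow_natCast q ((N / 2 + 2) / 2)]
    refine Real.rpow_le_rpow_of_exponent_ge hq0 hq1.le ?_
    rw [div_le_iff₀ (by norm_num : (0:ℝ) < 4)]
    have hN : N ≤ 4 * ((N / 2 + 2) / 2) := by omega
    have hN' : (N : ℝ) ≤ 4 * (((N / 2 + 2) / 2 : ℕ) : ℝ) := by exact_mod_cast hN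
    linarith
  calc (prodBern p N {ω | Ycount N ω ≠ Ytilde N ω}).toReal
      ≤ ∑ n ∈ Finset.Ioc (N / 2) N, q ^ ((n + 1) / 2) :=
        step1.trans (Finset.sum_le_sum step2)
    _ ≤ q ^ ((N / 2 + 2) / 2) * (2 / p ^ 2) := step3
    _ ≤ q ^ ((N : ℝ) / 4) * (2 / p ^ 2) := by
        refine mul_le_mul_of_nonneg_right step4 (by positivity)
    _ = 2 / p ^ 2 * q ^ ((N : ℝ) / 4) := by ring

lemma beta_bound (p : ℝ) (hp0 : 0 < p) (hp1 : p < 1) (N : ℕ) :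
    (prodBern p N {ω | Zcount N ω ≠ Ztilde N ω}).toReal
      ≤ 2 / p ^ 2 * (1 - p ^ 2) ^ ((N : ℝ) / 4) := by
  set q : ℝ := 1 - p ^ 2 with hq
  have hq0 : 0 < q := by nlinarith
  have hq1 : q < 1 := by nlinarith
  have step1 : (prodBern p N {ω | Zcount N ω ≠ Ztilde N ω}).toReal
      ≤ ∑ n ∈ Finset.Ioc N (N + N / 2),
          (prodBern p N {ω : Fin (N+1) → Bool | ¬ inSumset ω n}).toReal := by
    refine pr_union_bound p hp0.le hp1.le N _ _ _ (fun ω hω => ?_)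
    simp only [Set.mem_setOf_eq] at hω
    obtain ⟨n, h1, h2, h3⟩ := Z_ne_tilde N ω hω
    simp only [Set.mem_iUnion, Finset.mem_Ioc]
    exact ⟨n, ⟨h1, h2⟩, h3⟩
  have step2 : ∀ n ∈ Finset.Ioc N (N + N / 2),
      (prodBern p N {ω : Fin (N+1) → Bool | ¬ inSumset ω n}).toReal ≤ q ^ (N - n / 2) := by
    intro n hn
    simp only [Finset.mem_Ioc] at hn
    have hb := miss_bound p hp0.le hp1.le N n
    rw [Nat.card_Ico, show (n + 1) / 2 - (n - N) = N - n / 2 by omega] at hb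
    calc (prodBern p N {ω : Fin (N+1) → Bool | ¬ inSumset ω n}).toReal
        ≤ (ENNReal.ofReal q ^ (N - n / 2)).toReal :=
          ENNReal.toReal_mono (ENNReal.pow_ne_top ENNReal.ofReal_ne_top) hb
      _ = q ^ (N - n / 2) := by
          rw [ENNReal.toReal_pow, ENNReal.toReal_ofReal hq0.le]
  have step3 : ∑ n ∈ Finset.Ioc N (N + N / 2), q ^ (N - n / 2)
      ≤ q ^ (N - (N + N / 2) / 2) * (2 / p ^ 2) := by
    have := beta_sum q hq0.le hq1 N
    rw [show (1 : ℝ) - q = p ^ 2 by rw [hq]; ring] at this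
    exact this
  have step4 : q ^ (N - (N + N / 2) / 2) ≤ q ^ ((N : ℝ) / 4) := by
    rw [← Real.rpow_natCast q (N - (N + N / 2) / 2)]
    refine Real.rpow_le_rpow_of_exponent_ge hq0 hq1.le ?_
    rw [div_le_iff₀ (by norm_num : (0:ℝ) < 4)]
    have hN : N ≤ 4 * (N - (N + N / 2) / 2) := by omega
    have hN' : (N : ℝ) ≤ 4 * (((N - (N + N / 2) / 2 : ℕ)) : ℝ) := by exact_mod_cast hN
    linarith
  calc (prodBern p N {ω | Zcount N ω ≠ Ztilde N ω}).toReal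
      ≤ ∑ n ∈ Finset.Ioc N (N + N / 2), q ^ (N - n / 2) :=
        step1.trans (Finset.sum_le_sum step2)
    _ ≤ q ^ (N - (N + N / 2) / 2) * (2 / p ^ 2) := step3
    _ ≤ q ^ ((N : ℝ) / 4) * (2 / p ^ 2) := by
        refine mul_le_mul_of_nonneg_right step4 (by positivity)
    _ = 2 / p ^ 2 * q ^ ((N : ℝ) / 4) := by ring

end Main
/-- The distribution of `W` is close to the convolution of those of `Y` and `Z`. -/
theorem stmt6 (p : ℝ) (hp0 : 0 < p) (hp1 : p < 1) (N m : ℕ) (hm : m ≤ 2 * N) :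
    |(prodBern p N {ω | Wcount N ω = m}).toReal -
        ∑ y ∈ Finset.range (m + 1),
          (prodBern p N {ω | Ycount N ω = y}).toReal *
            (prodBern p N {ω | Zcount N ω = m - y}).toReal| ≤
      8 / p ^ 2 * (1 - p ^ 2) ^ ((N : ℝ) / 4) := by
  haveI := prodBern_isProb p hp0.le hp1.le N
  set μ := prodBern p N with hμ
  set EY : Set (Fin (N+1) → Bool) := {ω | Ycount N ω ≠ Ytilde N ω} with hEY
  set EZ : Set (Fin (N+1) → Bool) := {ω | Zcount N ω ≠ Ztilde N ω} with hEZ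
  set α := (μ EY).toReal with hα
  set β := (μ EZ).toReal with hβ
  set S := ∑ y ∈ Finset.range (m + 1),
      (μ {ω | Ycount N ω = y}).toReal * (μ {ω | Zcount N ω = m - y}).toReal with hS
  set St := ∑ y ∈ Finset.range (m + 1),
      (μ {ω | Ytilde N ω = y}).toReal * (μ {ω | Ztilde N ω = m - y}).toReal with hSt
  -- Step A : rewrite W as Y + Z
  have stepA : ({ω | Wcount N ω = m} : Set (Fin (N+1) → Bool))
      = {ω | Ycount N ω + Zcount N ω = m} := by
    ext ω; simp only [Set.mem_setOf_eq, Wcount_eq]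
  -- Step B
  have stepB : |(μ {ω | Wcount N ω = m}).toReal
      - (μ {ω | Ytilde N ω + Ztilde N ω = m}).toReal| ≤ α + β := by
    rw [stepA]
    have hsub1 : ({ω | Ycount N ω + Zcount N ω = m} : Set (Fin (N+1) → Bool))
        ⊆ {ω | Ytilde N ω + Ztilde N ω = m} ∪ (EY ∪ EZ) := by
      intro ω hω
      simp only [Set.mem_setOf_eq] at hω
      by_cases hy : Ycount N ω = Ytilde N ω
      · by_cases hz : Zcount N ω = Ztilde N ω
        · exact Or.inl (by simp only [Set.mem_setOf_eq]; omega)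
        · exact Or.inr (Or.inr hz)
      · exact Or.inr (Or.inl hy)
    have hsub2 : ({ω | Ytilde N ω + Ztilde N ω = m} : Set (Fin (N+1) → Bool))
        ⊆ {ω | Ycount N ω + Zcount N ω = m} ∪ (EY ∪ EZ) := by
      intro ω hω
      simp only [Set.mem_setOf_eq] at hω
      by_cases hy : Ycount N ω = Ytilde N ω
      · by_cases hz : Zcount N ω = Ztilde N ω
        · exact Or.inl (by simp only [Set.mem_setOf_eq]; omega)
        · exact Or.inr (Or.inr hz)
      · exact Or.inr (Or.inl hy)
    refine (pr_abs_sub_le p hp0.le hp1.le N _ _ (EY ∪ EZ) hsub1 hsub2).trans ?_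
    exact pr_union_le p hp0.le hp1.le N EY EZ
  -- Step C
  have stepC : (μ {ω | Ytilde N ω + Ztilde N ω = m}).toReal = St :=
    tilde_conv p hp0.le hp1.le N m
  -- Step D
  have stepD : |S - St| ≤ α + β := by
    have hsplit : S - St
        = (∑ y ∈ Finset.range (m + 1),
            ((μ {ω | Ycount N ω = y}).toReal - (μ {ω | Ytilde N ω = y}).toReal)
              * (μ {ω | Zcount N ω = m - y}).toReal)
          + (∑ y ∈ Finset.range (m + 1),
            ((μ {ω | Zcount N ω = m - y}).toReal - (μ {ω | Ztilde N ω = m - y}).toReal)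
              * (μ {ω | Ytilde N ω = y}).toReal) := by
      rw [hS, hSt, ← Finset.sum_add_distrib, ← Finset.sum_sub_distrib]
      refine Finset.sum_congr rfl (fun y _ => ?_)
      ring
    have hT1 : |∑ y ∈ Finset.range (m + 1),
        ((μ {ω | Ycount N ω = y}).toReal - (μ {ω | Ytilde N ω = y}).toReal)
          * (μ {ω | Zcount N ω = m - y}).toReal| ≤ α := by
      have hrw : ∀ y ∈ Finset.range (m + 1),
          ((μ {ω | Ycount N ω = y}).toReal - (μ {ω | Ytilde N ω = y}).toReal)
            * (μ {ω | Zcount N ω = m - y}).toReal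
          = ((μ {ω | Ycount N ω = y ∧ Ycount N ω ≠ Ytilde N ω}).toReal
              - (μ {ω | Ytilde N ω = y ∧ Ycount N ω ≠ Ytilde N ω}).toReal)
            * (μ {ω | Zcount N ω = m - y}).toReal := by
        intro y _
        rw [pr_diff_eq p hp0.le hp1.le N (Ycount N) (Ytilde N) y]
      rw [Finset.sum_congr rfl hrw]
      refine sum_signed_bound _ _ _ _ α
        (fun y _ => pr_nonneg p N _) (fun y _ => pr_nonneg p N _)
        (fun y _ => pr_nonneg p N _) (fun y _ => pr_le_one p hp0.le hp1.le N _) ?_ ?_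
      · refine pr_sum_disjoint_le p hp0.le hp1.le N _ _ EY ?_ ?_
        · intro y _ z _ hne
          refine Set.disjoint_left.2 (fun ω h1 h2 => ?_)
          simp only [Set.mem_setOf_eq] at h1 h2
          exact hne (h1.1.symm.trans h2.1)
        · intro y _ ω hω
          exact hω.2
      · refine pr_sum_disjoint_le p hp0.le hp1.le N _ _ EY ?_ ?_
        · intro y _ z _ hne
          refine Set.disjoint_left.2 (fun ω h1 h2 => ?_)
          simp only [Set.mem_setOf_eq] at h1 h2
          exact hne (h1.1.symm.trans h2.1)
        · intro y _ ω hω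
          exact hω.2
    have hT2 : |∑ y ∈ Finset.range (m + 1),
        ((μ {ω | Zcount N ω = m - y}).toReal - (μ {ω | Ztilde N ω = m - y}).toReal)
          * (μ {ω | Ytilde N ω = y}).toReal| ≤ β := by
      have hrw : ∀ y ∈ Finset.range (m + 1),
          ((μ {ω | Zcount N ω = m - y}).toReal - (μ {ω | Ztilde N ω = m - y}).toReal)
            * (μ {ω | Ytilde N ω = y}).toReal
          = ((μ {ω | Zcount N ω = m - y ∧ Zcount N ω ≠ Ztilde N ω}).toReal
              - (μ {ω | Ztilde N ω = m - y ∧ Zcount N ω ≠ Ztilde N ω}).toReal)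
            * (μ {ω | Ytilde N ω = y}).toReal := by
        intro y _
        rw [pr_diff_eq p hp0.le hp1.le N (Zcount N) (Ztilde N) (m - y)]
      rw [Finset.sum_congr rfl hrw]
      refine sum_signed_bound _ _ _ _ β
        (fun y _ => pr_nonneg p N _) (fun y _ => pr_nonneg p N _)
        (fun y _ => pr_nonneg p N _) (fun y _ => pr_le_one p hp0.le hp1.le N _) ?_ ?_
      · refine pr_sum_disjoint_le p hp0.le hp1.le N _ _ EZ ?_ ?_
        · intro y hy z hz hne
          simp only [Finset.mem_range] at hy hz
          refine Set.disjoint_left.2 (fun ω h1 h2 => ?_)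
          simp only [Set.mem_setOf_eq] at h1 h2
          have : m - y = m - z := h1.1.symm.trans h2.1
          omega
        · intro y _ ω hω
          exact hω.2
      · refine pr_sum_disjoint_le p hp0.le hp1.le N _ _ EZ ?_ ?_
        · intro y hy z hz hne
          simp only [Finset.mem_range] at hy hz
          refine Set.disjoint_left.2 (fun ω h1 h2 => ?_)
          simp only [Set.mem_setOf_eq] at h1 h2
          have : m - y = m - z := h1.1.symm.trans h2.1
          omega
        · intro y _ ω hω
          exact hω.2
    calc |S - St| ≤ |∑ y ∈ Finset.range (m + 1),
            ((μ {ω | Ycount N ω = y}).toReal - (μ {ω | Ytilde N ω = y}).toReal)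
              * (μ {ω | Zcount N ω = m - y}).toReal|
          + |∑ y ∈ Finset.range (m + 1),
            ((μ {ω | Zcount N ω = m - y}).toReal - (μ {ω | Ztilde N ω = m - y}).toReal)
              * (μ {ω | Ytilde N ω = y}).toReal| := by
          rw [hsplit]; exact abs_add_le _ _
      _ ≤ α + β := by linarith
  -- combine
  have hαb : α ≤ 2 / p ^ 2 * (1 - p ^ 2) ^ ((N : ℝ) / 4) := alpha_bound p hp0 hp1 N
  have hβb : β ≤ 2 / p ^ 2 * (1 - p ^ 2) ^ ((N : ℝ) / 4) := beta_bound p hp0 hp1 N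
  have htot : |(μ {ω | Wcount N ω = m}).toReal - S|
      ≤ |(μ {ω | Wcount N ω = m}).toReal - (μ {ω | Ytilde N ω + Ztilde N ω = m}).toReal|
        + |(μ {ω | Ytilde N ω + Ztilde N ω = m}).toReal - S| := abs_sub_le _ _ _
  have h2 : |(μ {ω | Ytilde N ω + Ztilde N ω = m}).toReal - S| = |S - St| := by
    rw [stepC, abs_sub_comm]
  have final : |(μ {ω | Wcount N ω = m}).toReal - S|
      ≤ 4 * (2 / p ^ 2 * (1 - p ^ 2) ^ ((N : ℝ) / 4)) := by
    rw [h2] at htot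
    linarith
  calc |(μ {ω | Wcount N ω = m}).toReal - S|
      ≤ 4 * (2 / p ^ 2 * (1 - p ^ 2) ^ ((N : ℝ) / 4)) := final
    _ = 8 / p ^ 2 * (1 - p ^ 2) ^ ((N : ℝ) / 4) := by ring
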